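/- Let (M,d) be a metric space and T : Ω × M → M a sample-continuous strong random operator on a probability space (Ω,𝓕,P). Then the lifted map T̂ : L⁰(𝓕,M) → L⁰(𝓕,M), sending the equivalence class of a strong random element x⁰ to the equivalence class of ω ↦ T(ω,x⁰(ω)), is well-defined, σ-stable and continuous for the (ε,λ)-topology; moreover x ∈ L⁰(𝓕,M) is a fixed point of T̂ if and only if any representative x⁰ of x is a random fixed point of T (i.e., T(ω,x⁰(ω)) = x⁰(ω) for a.e. ω). -/

import Mathlib

open MeasureTheory Filter Set

variable {Ω : Type*} [MeasurableSpace Ω]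

/-- `(E,d)` is a random metric space with base `(Ω,𝓕,μ)`: `d x y` represents an element of
`L⁰₊(𝓕)` (nonnegative a.e.), equality/inequality of distances being understood a.e. -/
structure IsRandomMetric (μ : Measure Ω) {E : Type*} (d : E → E → Ω → ℝ) : Prop where
  meas : ∀ x y, Measurable (d x y)
  nonneg : ∀ x y, ∀ᵐ ω ∂μ, 0 ≤ d x y ω
  eq_zero_iff : ∀ x y, (d x y =ᵐ[μ] 0) ↔ x = y
  symm : ∀ x y, d x y =ᵐ[μ] d y x
  triangle : ∀ x y z, ∀ᵐ ω ∂μ, d x z ω ≤ d x y ω + d y z ω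

/-- Cauchy sequence for the `(ε,λ)`-uniformity with base
`U(ε,λ) = {(x,y) : μ (d(x,y) < ε) > 1 − λ}`. -/
def ELCauchy (μ : Measure Ω) {E : Type*} (d : E → E → Ω → ℝ) (s : ℕ → E) : Prop :=
  ∀ ε : ℝ, 0 < ε → ∀ l : ℝ, 0 < l → l < 1 →
    ∃ N, ∀ m ≥ N, ∀ n ≥ N, μ {ω | d (s m) (s n) ω < ε} > ENNReal.ofReal (1 - l)

/-- Convergence for the `(ε,λ)`-uniformity (convergence in probability of distances). -/
def ELTendsto (μ : Measure Ω) {E : Type*} (d : E → E → Ω → ℝ) (s : ℕ → E) (x : E) : Prop :=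
  ∀ ε : ℝ, 0 < ε → ∀ l : ℝ, 0 < l → l < 1 →
    ∃ N, ∀ n ≥ N, μ {ω | d (s n) x ω < ε} > ENNReal.ofReal (1 - l)

/-- `(ε,λ)`-completeness: the metrizable `(ε,λ)`-uniformity is complete. -/
def ELComplete (μ : Measure Ω) {E : Type*} (d : E → E → Ω → ℝ) : Prop :=
  ∀ s : ℕ → E, ELCauchy μ d s → ∃ x, ELTendsto μ d s x

/-- A countable measurable partition of `Ω`. -/
def IsMeasPartition {Ω : Type*} [MeasurableSpace Ω] (A : ℕ → Set Ω) : Prop :=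
  (∀ n, MeasurableSet (A n)) ∧ Pairwise (Function.onFun Disjoint A) ∧ (⋃ n, A n) = Set.univ

/-- `x` is the countable concatenation `Σₙ Ĩ_{Aₙ} xₙ` of `(xₙ)` along `(Aₙ)`:
`Ĩ_{Aₙ}·d(x,xₙ) = 0` for all `n`. -/
def IsConcat {Ω : Type*} [MeasurableSpace Ω] (μ : MeasureTheory.Measure Ω) {E : Type*}
    (d : E → E → Ω → ℝ) (A : ℕ → Set Ω) (xs : ℕ → E) (x : E) : Prop :=
  ∀ n, ∀ᵐ ω ∂μ, ω ∈ A n → d x (xs n) ω = 0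

/-- The random metric space `(E,d)` is σ-stable. -/
def SigmaStable {Ω : Type*} [MeasurableSpace Ω] (μ : MeasureTheory.Measure Ω) {E : Type*}
    (d : E → E → Ω → ℝ) : Prop :=
  ∀ A : ℕ → Set Ω, IsMeasPartition A → ∀ xs : ℕ → E, ∃ x, IsConcat μ d A xs x

/-- A nonempty subset `G` is σ-stable: countable concatenations of elements of `G` exist in `G`. -/
def SigmaStableSet {Ω : Type*} [MeasurableSpace Ω] (μ : MeasureTheory.Measure Ω) {E : Type*}
    (d : E → E → Ω → ℝ) (G : Set E) : Prop :=
  ∀ A : ℕ → Set Ω, IsMeasPartition A → ∀ xs : ℕ → E, (∀ n, xs n ∈ G) →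
    ∃ x ∈ G, IsConcat μ d A xs x


open scoped ENNReal

section AuxLemmas
variable {M : Type*} [MetricSpace M] [MeasurableSpace M] [BorelSpace M]

theorem aux_sm (T : Ω → M → M) (hTs : ∀ x : M, MeasureTheory.StronglyMeasurable (fun ω => T ω x))
    (hTc : ∀ ω, Continuous (T ω)) {x : Ω → M} (hx : MeasureTheory.StronglyMeasurable x) :
    MeasureTheory.StronglyMeasurable fun ω => T ω (x ω) := by
  have hSsep : TopologicalSpace.IsSeparable (closure (Set.range x)) :=
    hx.isSeparable_range.closure
  haveI := hSsep.separableSpace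
  haveI : SecondCountableTopology (closure (Set.range x)) :=
    UniformSpace.secondCountable_of_separable _
  have hu : MeasureTheory.StronglyMeasurable
      (Function.uncurry fun (m : closure (Set.range x)) (ω : Ω) => T ω m) :=
    MeasureTheory.stronglyMeasurable_uncurry_of_continuous_of_stronglyMeasurable
      (fun ω => (hTc ω).comp continuous_subtype_val) (fun m => hTs m)
  have hx' : Measurable fun ω => (⟨x ω, subset_closure (mem_range_self ω)⟩ :
      closure (Set.range x)) := hx.measurable.subtype_mk
  exact hu.comp_measurable (hx'.prodMk measurable_id)

omit [MeasurableSpace M] [BorelSpace M] in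
theorem el_iff_tim (μ : Measure Ω) [IsProbabilityMeasure μ]
    {s : ℕ → Ω → M} {x : Ω → M} (hs : ∀ n, MeasureTheory.StronglyMeasurable (s n))
    (hx : MeasureTheory.StronglyMeasurable x) :
    ELTendsto μ (fun u v ω => dist (u ω) (v ω)) s x ↔ TendstoInMeasure μ s atTop x := by
  have hA : ∀ n (ε : ℝ), MeasurableSet {ω | dist (s n ω) (x ω) < ε} := fun n ε =>
    ((hs n).dist hx).measurable measurableSet_Iio
  have hcompl : ∀ n (ε : ℝ),
      {ω | ε ≤ dist (s n ω) (x ω)} = {ω | dist (s n ω) (x ω) < ε}ᶜ := by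
    intro n ε; ext ω; simp [not_lt]
  rw [tendstoInMeasure_iff_dist]
  constructor
  · intro h ε hε
    rw [ENNReal.tendsto_nhds_zero]
    intro δ hδ
    set δ' : ℝ≥0∞ := min δ (ENNReal.ofReal (1/2)) with hδ'def
    have hδ'pos : 0 < δ' := lt_min hδ (by simp)
    have hδ'lt : δ' < 1 := lt_of_le_of_lt (min_le_right _ _) (by
      rw [show (1:ℝ≥0∞) = ENNReal.ofReal 1 by simp]
      exact ENNReal.ofReal_lt_ofReal_iff_of_nonneg (by norm_num) |>.mpr (by norm_num))
    set l : ℝ := δ'.toReal with hldef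
    have hδ'ne : δ' ≠ ⊤ := ne_top_of_lt (lt_of_lt_of_le hδ'lt le_top)
    have hl0 : 0 < l := ENNReal.toReal_pos hδ'pos.ne' hδ'ne
    have hl1 : l < 1 := by
      have := (ENNReal.toReal_lt_toReal hδ'ne (by simp)).mpr hδ'lt
      simpa using this
    obtain ⟨N, hN⟩ := h ε hε l hl0 hl1
    filter_upwards [eventually_ge_atTop N] with n hn
    have h1 := hN n hn
    have hle : μ {ω | ε ≤ dist (s n ω) (x ω)} ≤ 1 - ENNReal.ofReal (1 - l) := by
      rw [hcompl, prob_compl_eq_one_sub (hA n ε)]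
      exact tsub_le_tsub_left h1.le 1
    refine hle.trans ?_
    have heq : (1:ℝ≥0∞) - ENNReal.ofReal (1 - l) = ENNReal.ofReal l := by
      rw [show (1:ℝ≥0∞) = ENNReal.ofReal 1 by simp, ← ENNReal.ofReal_sub _ (by linarith)]
      norm_num
    rw [heq, hldef, ENNReal.ofReal_toReal hδ'ne]
    exact min_le_left _ _
  · intro h ε hε l hl0 hl1
    have hev : ∀ᶠ n in atTop, μ {ω | ε ≤ dist (s n ω) (x ω)} < ENNReal.ofReal l :=
      (h ε hε).eventually (eventually_lt_nhds (ENNReal.ofReal_pos.mpr hl0))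
    obtain ⟨N, hN⟩ := eventually_atTop.mp hev
    refine ⟨N, fun n hn => ?_⟩
    by_contra hle
    push_neg at hle
    have hc := hN n hn
    have hsum : μ {ω | dist (s n ω) (x ω) < ε} + μ {ω | ε ≤ dist (s n ω) (x ω)} = 1 := by
      rw [hcompl]; simpa using measure_add_measure_compl (μ := μ) (hA n ε)
    have hlt : (1:ℝ≥0∞) < 1 := by
      calc (1:ℝ≥0∞) = _ := hsum.symm
        _ < ENNReal.ofReal (1-l) + ENNReal.ofReal l :=
            ENNReal.add_lt_add_of_le_of_lt (measure_ne_top μ _) hle hc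
        _ = ENNReal.ofReal 1 := by rw [← ENNReal.ofReal_add (by linarith) hl0.le]; norm_num
        _ = 1 := by simp
    exact absurd hlt (lt_irrefl _)

end AuxLemmas

/-- for a sample-continuous strong random operator `T : Ω × M → M`, the
lifted operator `T̂` on `L⁰(𝓕,M)` (here expressed on strongly measurable representatives,
`L⁰(𝓕,M)` carrying the random metric `d(x,y)(ω) = dist(x(ω),y(ω))`) is well defined,
σ-stable and `(ε,λ)`-continuous, and fixed points of `T̂` correspond exactly to random
fixed points of `T`. -/
theorem lifted_operator_properties {M : Type*} [MetricSpace M] [MeasurableSpace M]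
    [BorelSpace M]
    (μ : Measure Ω) [IsProbabilityMeasure μ]
    (T : Ω → M → M)
    (hTs : ∀ x : M, MeasureTheory.StronglyMeasurable (fun ω => T ω x))
    (hTc : ∀ ω : Ω, Continuous (T ω)) :
    -- `T̂` maps `L⁰(𝓕,M)` to `L⁰(𝓕,M)` and is well defined on equivalence classes
    (∀ x : Ω → M, MeasureTheory.StronglyMeasurable x →
      MeasureTheory.StronglyMeasurable (fun ω => T ω (x ω))) ∧
    (∀ x y : Ω → M, MeasureTheory.StronglyMeasurable x →
      MeasureTheory.StronglyMeasurable y → x =ᵐ[μ] y →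
      (fun ω => T ω (x ω)) =ᵐ[μ] (fun ω => T ω (y ω))) ∧
    -- `T̂` is σ-stable: it preserves countable concatenations
    (∀ A : ℕ → Set Ω, IsMeasPartition A → ∀ xs : ℕ → Ω → M, ∀ x : Ω → M,
      IsConcat μ (fun u v ω => dist (u ω) (v ω)) A xs x →
      IsConcat μ (fun u v ω => dist (u ω) (v ω)) A
        (fun n => fun ω => T ω (xs n ω)) (fun ω => T ω (x ω))) ∧
    -- `T̂` is continuous for the `(ε,λ)`-topology
    (∀ (s : ℕ → Ω → M) (x : Ω → M), (∀ n, MeasureTheory.StronglyMeasurable (s n)) →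
      MeasureTheory.StronglyMeasurable x →
      ELTendsto μ (fun u v ω => dist (u ω) (v ω)) s x →
      ELTendsto μ (fun u v ω => dist (u ω) (v ω))
        (fun n => fun ω => T ω (s n ω)) (fun ω => T ω (x ω))) ∧
    -- fixed points of `T̂` are exactly random fixed points of `T`
    (∀ x : Ω → M, MeasureTheory.StronglyMeasurable x →
      (((fun ω => T ω (x ω)) =ᵐ[μ] x) ↔ ∀ᵐ ω ∂μ, T ω (x ω) = x ω)) := by
  have hSM : ∀ x : Ω → M, MeasureTheory.StronglyMeasurable x →
      MeasureTheory.StronglyMeasurable (fun ω => T ω (x ω)) :=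
    fun x hx => aux_sm T hTs hTc hx
  refine ⟨hSM, ?_, ?_, ?_, ?_⟩
  · intro x y _ _ hxy
    filter_upwards [hxy] with ω hω
    simp only [hω]
  · intro A hA xs x hconc n
    filter_upwards [hconc n] with ω hω hmem
    have := hω hmem
    rw [dist_eq_zero] at this ⊢
    rw [this]
  · intro s x hs hx h
    rw [el_iff_tim μ hs hx] at h
    rw [el_iff_tim μ (fun n => hSM _ (hs n)) (hSM _ hx)]
    rw [tendstoInMeasure_iff_dist]
    intro ε hε
    by_contra hcon
    rw [ENNReal.tendsto_nhds_zero] at hcon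
    push_neg at hcon
    obtain ⟨δ, hδ, hfreq⟩ := hcon
    obtain ⟨φ, hφmono, hφ⟩ := Filter.extraction_of_frequently_atTop hfreq
    have hsub : TendstoInMeasure μ (fun n => s (φ n)) atTop x := fun ε' hε' =>
      (h ε' hε').comp hφmono.tendsto_atTop
    obtain ⟨ψ, hψmono, hae⟩ := hsub.exists_seq_tendsto_ae
    have hT : TendstoInMeasure μ (fun n ω => T ω (s (φ (ψ n)) ω)) atTop
        (fun ω => T ω (x ω)) := by
      refine tendstoInMeasure_of_tendsto_ae
        (fun n => (hSM _ (hs (φ (ψ n)))).aestronglyMeasurable) ?_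
      filter_upwards [hae] with ω hω
      exact ((hTc ω).tendsto _).comp hω
    have hlb : ∀ n, δ ≤ μ {ω | ε ≤ dist (T ω (s (φ (ψ n)) ω)) (T ω (x ω))} :=
      fun n => (hφ (ψ n)).le
    have : δ ≤ 0 := ge_of_tendsto (tendstoInMeasure_iff_dist.mp hT ε hε) (Eventually.of_forall hlb)
    exact absurd (le_antisymm this zero_le) hδ.ne'
  · intro x _
    rfl
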